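/- arXiv:1303.5838 — 4 statements merged into one kernel-verified Lean document; each statement's English description precedes it below -/
import Mathlib

section
/- For all ε > 0, any real random variable X and random vector Y (on the same probability space), one has P(E(X²|Y) ≤ ε²) ≤ (4/3) P(|X| ≤ 2ε). -/
open MeasureTheory
open scoped ENNReal
set_option maxHeartbeats 1000000

lemma stmt0_aux {Ω : Type*} {mΩ : MeasurableSpace Ω} (m' : {m : MeasurableSpace Ω // m ≤ mΩ})
    (μ : Measure Ω) [IsProbabilityMeasure μ]
    (X : Ω → ℝ) (hX : Measurable X)
    (hint : Integrable (fun ω => (X ω) ^ 2) μ)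
    (ε : ℝ) (hε : 0 < ε) :
    μ {ω | (μ[fun ω' => (X ω') ^ 2 | m'.1]) ω ≤ ε ^ 2}
      ≤ (4 / 3) * μ {ω | |X ω| ≤ 2 * ε} := by
  set g : Ω → ℝ := μ[fun ω' => (X ω') ^ 2 | m'.1] with hg_def
  set A : Set Ω := {ω | g ω ≤ ε ^ 2} with hA_def
  set S : Set Ω := {ω | |X ω| ≤ 2 * ε} with hS_def
  have hgm : Measurable[m'.1] g := stronglyMeasurable_condExp.measurable
  have hA_m : MeasurableSet[m'.1] A := measurableSet_le hgm measurable_const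
  have hA : MeasurableSet[mΩ] A := m'.2 _ hA_m
  have hS : MeasurableSet[mΩ] S := measurableSet_le hX.abs measurable_const
  have hB : MeasurableSet[mΩ] Sᶜ := hS.compl
  have hε2 : 0 < ε ^ 2 := by positivity
  have h1 : ∫ ω in A, (X ω) ^ 2 ∂μ ≤ ε ^ 2 * (μ A).toReal := by
    have heq : ∫ ω in A, (X ω) ^ 2 ∂μ = ∫ ω in A, g ω ∂μ :=
      (setIntegral_condExp m'.2 hint hA_m).symm
    rw [heq]
    calc ∫ ω in A, g ω ∂μ ≤ ∫ _ω in A, ε ^ 2 ∂μ := by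
          apply setIntegral_mono_on integrable_condExp.integrableOn
            (integrableOn_const (measure_ne_top μ A) enorm_ne_top) hA
          intro ω hω; exact hω
      _ = ε ^ 2 * (μ A).toReal := by
          rw [setIntegral_const]; rw [smul_eq_mul, mul_comm]; rfl
  have h2 : 4 * ε ^ 2 * (μ (A ∩ Sᶜ)).toReal ≤ ∫ ω in A ∩ Sᶜ, (X ω) ^ 2 ∂μ := by
    have hmono : ∫ _ω in A ∩ Sᶜ, (4 * ε ^ 2) ∂μ ≤ ∫ ω in A ∩ Sᶜ, (X ω) ^ 2 ∂μ := by
      apply setIntegral_mono_on (integrableOn_const (measure_ne_top μ _) enorm_ne_top)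
        hint.integrableOn (hA.inter hB)
      intro ω hω
      have h2ε : 2 * ε < |X ω| := not_le.1 hω.2
      have hsq : (2 * ε) ^ 2 ≤ (X ω) ^ 2 := by
        rw [← sq_abs (X ω)]
        exact pow_le_pow_left₀ (by positivity) h2ε.le 2
      nlinarith
    calc 4 * ε ^ 2 * (μ (A ∩ Sᶜ)).toReal = ∫ _ω in A ∩ Sᶜ, (4 * ε ^ 2) ∂μ := by
          rw [setIntegral_const, smul_eq_mul, mul_comm]; rfl
      _ ≤ _ := hmono
  have h3 : ∫ ω in A ∩ Sᶜ, (X ω) ^ 2 ∂μ ≤ ∫ ω in A, (X ω) ^ 2 ∂μ := by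
    apply setIntegral_mono_set hint.integrableOn
      (Filter.Eventually.of_forall fun ω => sq_nonneg _)
    exact HasSubset.Subset.eventuallyLE (Set.inter_subset_left)
  have h4 : (μ A).toReal ≤ (μ S).toReal + (μ (A ∩ Sᶜ)).toReal := by
    have hsub : A ⊆ S ∪ (A ∩ Sᶜ) := by
      intro ω hω
      by_cases h : ω ∈ S
      · exact Or.inl h
      · exact Or.inr ⟨hω, h⟩
    have hle : μ A ≤ μ S + μ (A ∩ Sᶜ) :=
      le_trans (measure_mono hsub) (measure_union_le _ _)
    have := ENNReal.toReal_mono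
      (ENNReal.add_ne_top.2 ⟨measure_ne_top μ _, measure_ne_top μ _⟩) hle
    rwa [ENNReal.toReal_add (measure_ne_top μ _) (measure_ne_top μ _)] at this
  have hc : (μ (A ∩ Sᶜ)).toReal ≤ (μ A).toReal / 4 := by
    have hkey := le_trans h2 (le_trans h3 h1)
    nlinarith [hkey, hε2]
  have hfinal : (μ A).toReal ≤ 4 / 3 * (μ S).toReal := by nlinarith [h4, hc]
  have hRHS : ((4 / 3 : ℝ≥0∞) * μ S) ≠ ⊤ :=
    ENNReal.mul_ne_top (ENNReal.div_lt_top (by norm_num) (by norm_num)).ne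
      (measure_ne_top μ _)
  rw [← ENNReal.toReal_le_toReal (measure_ne_top μ _) hRHS, ENNReal.toReal_mul]
  have h43 : ((4 / 3 : ℝ≥0∞)).toReal = 4 / 3 := by
    rw [ENNReal.toReal_div]; norm_num
  rw [h43]
  exact hfinal

/-- For all ε > 0, any real random variable X and random vector Y on the same
probability space, P(E(X²|Y) ≤ ε²) ≤ (4/3) P(|X| ≤ 2ε). -/
theorem stmt0 {Ω F : Type*} [MeasurableSpace F] {mΩ : MeasurableSpace Ω}
    (μ : Measure Ω) [IsProbabilityMeasure μ]
    (X : Ω → ℝ) (Y : Ω → F)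
    (hX : Measurable X) (hY : Measurable Y)
    (hint : Integrable (fun ω => (X ω) ^ 2) μ)
    (ε : ℝ) (hε : 0 < ε) :
    μ {ω | (μ[fun ω' => (X ω') ^ 2 | MeasurableSpace.comap Y ‹MeasurableSpace F›]) ω ≤ ε ^ 2}
      ≤ (4 / 3) * μ {ω | |X ω| ≤ 2 * ε} :=
  stmt0_aux ⟨_, hY.comap_le⟩ μ X hX hint ε hε
end

section
/- For any n×n complex matrices C and C' with ordered singular values sᵢ and sᵢ', one has ∑ᵢ₌₁ⁿ |sᵢ − sᵢ'|² ≤ ‖C − C'‖_HS² (Hoffman–Wielandt inequality for singular values). -/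
open Finset Matrix Complex

/-- The singular values of a rectangular complex matrix, in nonincreasing order:
the square roots of the eigenvalues of C * Cᴴ, sorted nonincreasingly. -/
noncomputable def svals {k n : ℕ} (C : Matrix (Fin k) (Fin n) ℂ) : Fin k → ℝ :=
  fun i =>
    Real.sqrt ((Matrix.isHermitian_mul_conjTranspose_self C).eigenvalues
      (Tuple.sort (Matrix.isHermitian_mul_conjTranspose_self C).eigenvalues i.rev))

lemma telescope_aux (A : ℕ → ℝ) {n i : ℕ} (hi : i < n) (hn : A n = 0) :
    A i = ∑ p ∈ Ico i n, (A p - A (p+1)) := by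
  rw [Finset.sum_Ico_eq_sum_range]
  have : ∑ k ∈ range (n - i), (A (i + k) - A (i + (k+1))) = A (i + 0) - A (i + (n - i)) :=
    Finset.sum_range_sub' (fun k => A (i + k)) (n - i)
  simp only [← add_assoc] at this
  rw [this, Nat.add_sub_cancel' hi.le, hn, add_zero, sub_zero]

lemma swap_tri (n : ℕ) (F : ℕ → ℕ → ℝ) :
    ∑ k ∈ range n, ∑ p ∈ Ico k n, F k p
      = ∑ p ∈ range n, ∑ k ∈ range (p+1), F k p := by
  have h1 : ∀ k, k < n → ∑ p ∈ Ico k n, F k p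
      = ∑ p ∈ range n, if k ≤ p then F k p else 0 := by
    intro k hk
    rw [← Finset.sum_filter]
    congr 1
    ext x
    simp only [mem_filter, mem_range, mem_Ico]
    omega
  have h2 : ∀ p, p < n → ∑ k ∈ range (p+1), F k p
      = ∑ k ∈ range n, if k ≤ p then F k p else 0 := by
    intro p hp
    rw [← Finset.sum_filter]
    congr 1
    ext x
    simp only [mem_filter, mem_range, Nat.lt_succ_iff]
    omega
  rw [Finset.sum_congr rfl (fun k hk => h1 k (mem_range.mp hk)),
    Finset.sum_congr rfl (fun p hp => h2 p (mem_range.mp hp)), Finset.sum_comm]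

/-- Abel summation over `range n`. -/
lemma abel_sum (n : ℕ) (A f : ℕ → ℝ) (hAn : A n = 0) :
    ∑ k ∈ range n, f k * A k
      = ∑ p ∈ range n, (A p - A (p+1)) * ∑ k ∈ range (p+1), f k := by
  calc ∑ k ∈ range n, f k * A k
      = ∑ k ∈ range n, ∑ p ∈ Ico k n, f k * (A p - A (p+1)) := by
        refine Finset.sum_congr rfl fun k hk => ?_
        rw [← Finset.mul_sum, ← telescope_aux A (mem_range.mp hk) hAn]
    _ = ∑ p ∈ range n, ∑ k ∈ range (p+1), f k * (A p - A (p+1)) := swap_tri n _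
    _ = _ := by
        refine Finset.sum_congr rfl fun p hp => ?_
        rw [Finset.mul_sum]
        exact Finset.sum_congr rfl fun k hk => mul_comm _ _

lemma indicator_count (p q : ℕ) :
    ∑ k ∈ range (q+1), (if k ≤ p then (1:ℝ) else 0) = min ((p:ℝ)+1) ((q:ℝ)+1) := by
  rw [← Finset.sum_filter]
  have h : filter (fun k => k ≤ p) (range (q+1)) = range (min (p+1) (q+1)) := by
    ext x; simp only [mem_filter, mem_range, lt_min_iff]; omega
  rw [h, Finset.sum_const, card_range, nsmul_eq_mul, mul_one]
  push_cast [Nat.cast_min]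
  rfl

/-- The doubly-substochastic rearrangement inequality, `ℕ`-indexed. -/
lemma rearr_nat (n : ℕ) (A B : ℕ → ℝ) (M : ℕ → ℕ → ℝ)
    (hA : ∀ k, A (k+1) ≤ A k) (hAn : A n = 0)
    (hB : ∀ k, B (k+1) ≤ B k) (hBn : B n = 0)
    (hM : ∀ p q, p < n → q < n →
      ∑ k ∈ range (p+1), ∑ l ∈ range (q+1), M k l ≤ min (p+1 : ℝ) (q+1)) :
    ∑ k ∈ range n, ∑ l ∈ range n, A k * B l * M k l
      ≤ ∑ i ∈ range n, A i * B i := by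
  have key1 : ∑ k ∈ range n, ∑ l ∈ range n, A k * B l * M k l
      = ∑ p ∈ range n, (A p - A (p+1)) * ∑ q ∈ range n, (B q - B (q+1)) *
          ∑ l ∈ range (q+1), ∑ k ∈ range (p+1), M k l := by
    have step1 : ∑ k ∈ range n, ∑ l ∈ range n, A k * B l * M k l
        = ∑ p ∈ range n, (A p - A (p+1)) *
            ∑ k ∈ range (p+1), ∑ l ∈ range n, B l * M k l := by
      rw [← abel_sum n A (fun k => ∑ l ∈ range n, B l * M k l) hAn]
      refine Finset.sum_congr rfl fun k _ => ?_
      rw [mul_comm, Finset.mul_sum]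
      exact Finset.sum_congr rfl fun l _ => by ring
    rw [step1]
    refine Finset.sum_congr rfl fun p _ => ?_
    congr 1
    rw [Finset.sum_comm]
    calc ∑ l ∈ range n, ∑ k ∈ range (p+1), B l * M k l
        = ∑ l ∈ range n, (fun l => ∑ k ∈ range (p+1), M k l) l * B l := by
          refine Finset.sum_congr rfl fun l _ => ?_
          rw [← Finset.mul_sum, mul_comm]
      _ = _ := by
          rw [abel_sum n B _ hBn]
  have key2 : ∑ i ∈ range n, A i * B i
      = ∑ p ∈ range n, (A p - A (p+1)) * ∑ q ∈ range n, (B q - B (q+1)) *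
          (min (p+1 : ℝ) (q+1)) := by
    have step1 : ∑ i ∈ range n, A i * B i
        = ∑ p ∈ range n, (A p - A (p+1)) * ∑ k ∈ range (p+1), B k := by
      rw [← abel_sum n A B hAn]
      exact Finset.sum_congr rfl fun k _ => mul_comm _ _
    rw [step1]
    refine Finset.sum_congr rfl fun p hp => ?_
    congr 1
    have hfil : filter (fun k => k ≤ p) (range n) = range (p+1) := by
      have := mem_range.mp hp
      ext x; simp only [mem_filter, mem_range]; omega
    have : ∑ k ∈ range (p+1), B k
        = ∑ k ∈ range n, (fun k => if k ≤ p then (1:ℝ) else 0) k * B k := by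
      simp only [ite_mul, one_mul, zero_mul, ← Finset.sum_filter, hfil]
    rw [this, abel_sum n B _ hBn]
    refine Finset.sum_congr rfl fun q _ => ?_
    rw [indicator_count]
  rw [key1, key2]
  refine Finset.sum_le_sum fun p hp => ?_
  refine mul_le_mul_of_nonneg_left ?_ (by linarith [hA p])
  refine Finset.sum_le_sum fun q hq => ?_
  refine mul_le_mul_of_nonneg_left ?_ (by linarith [hB q])
  rw [Finset.sum_comm]
  exact hM p q (mem_range.mp hp) (mem_range.mp hq)

lemma sum_attachFin' {n : ℕ} (s : Finset ℕ) (h : ∀ m ∈ s, m < n) (f : Fin n → ℝ) :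
    ∑ x ∈ s.attachFin h, f x = ∑ k ∈ s, if hk : k < n then f ⟨k, hk⟩ else 0 := by
  refine Finset.sum_bij (fun (x : Fin n) (_ : x ∈ s.attachFin h) => (x : ℕ))
    (fun x hx => (Finset.mem_attachFin h).mp hx)
    (fun x hx y hy hxy => Fin.val_injective hxy)
    (fun k hk => ⟨⟨k, h k hk⟩, (Finset.mem_attachFin h).mpr hk, rfl⟩)
    (fun x hx => ?_)
  rw [dif_pos x.isLt, Fin.eta]

/-- Fin-level rearrangement inequality. -/
lemma rearr_fin {n : ℕ} (a b : Fin n → ℝ) (ha : Antitone a) (ha0 : ∀ i, 0 ≤ a i)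
    (hb : Antitone b) (hb0 : ∀ i, 0 ≤ b i) (M : Fin n → Fin n → ℝ)
    (hM : ∀ S T : Finset (Fin n), ∑ k ∈ S, ∑ l ∈ T, M k l ≤ min (S.card : ℝ) T.card) :
    ∑ k, ∑ l, a k * b l * M k l ≤ ∑ i, a i * b i := by
  classical
  set A : ℕ → ℝ := fun k => if hk : k < n then a ⟨k, hk⟩ else 0 with hAdef
  set B : ℕ → ℝ := fun k => if hk : k < n then b ⟨k, hk⟩ else 0 with hBdef
  set M' : ℕ → ℕ → ℝ := fun k l =>
    if hk : k < n then if hl : l < n then M ⟨k, hk⟩ ⟨l, hl⟩ else 0 else 0 with hMdef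
  have hAanti : ∀ k, A (k+1) ≤ A k := by
    intro k
    by_cases h1 : k + 1 < n
    · have hk : k < n := by omega
      simp only [hAdef, dif_pos h1, dif_pos hk]
      exact ha (by simp [Fin.le_def])
    · by_cases hk : k < n
      · simp only [hAdef, dif_neg h1, dif_pos hk]; exact ha0 _
      · simp [hAdef, dif_neg h1, dif_neg hk]
  have hBanti : ∀ k, B (k+1) ≤ B k := by
    intro k
    by_cases h1 : k + 1 < n
    · have hk : k < n := by omega
      simp only [hBdef, dif_pos h1, dif_pos hk]
      exact hb (by simp [Fin.le_def])
    · by_cases hk : k < n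
      · simp only [hBdef, dif_neg h1, dif_pos hk]; exact hb0 _
      · simp [hBdef, dif_neg h1, dif_neg hk]
  have hAn : A n = 0 := by simp [hAdef]
  have hBn : B n = 0 := by simp [hBdef]
  have hM' : ∀ p q, p < n → q < n →
      ∑ k ∈ range (p+1), ∑ l ∈ range (q+1), M' k l ≤ min (p+1 : ℝ) (q+1) := by
    intro p q hp hq
    have hps : ∀ m ∈ range (p+1), m < n := fun m hm => by
      have := mem_range.mp hm; omega
    have hqs : ∀ m ∈ range (q+1), m < n := fun m hm => by
      have := mem_range.mp hm; omega
    have := hM ((range (p+1)).attachFin hps) ((range (q+1)).attachFin hqs)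
    rw [sum_attachFin'] at this
    have heq : ∀ k ∈ range (p+1), (if hk : k < n then
          ∑ x ∈ (range (q+1)).attachFin hqs, M ⟨k, hk⟩ x else 0)
        = ∑ l ∈ range (q+1), M' k l := by
      intro k hk
      rw [dif_pos (hps k hk), sum_attachFin']
      refine Finset.sum_congr rfl fun l hl => ?_
      rw [dif_pos (hqs l hl)]
      simp [hMdef, dif_pos (hps k hk), dif_pos (hqs l hl)]
    rw [Finset.sum_congr rfl heq] at this
    refine this.trans ?_
    rw [Finset.card_attachFin, Finset.card_attachFin, card_range, card_range]
    push_cast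
    rfl
  have := rearr_nat n A B M' hAanti hAn hBanti hBn hM'
  calc ∑ k, ∑ l, a k * b l * M k l
      = ∑ k ∈ range n, ∑ l ∈ range n, A k * B l * M' k l := by
        rw [← Fin.sum_univ_eq_sum_range (fun k => ∑ l ∈ range n, A k * B l * M' k l) n]
        refine Finset.sum_congr rfl fun k _ => ?_
        rw [← Fin.sum_univ_eq_sum_range (fun l => A k * B l * M' k l) n]
        refine Finset.sum_congr rfl fun l _ => ?_
        simp [hAdef, hBdef, hMdef, k.isLt, l.isLt]
    _ ≤ ∑ i ∈ range n, A i * B i := this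
    _ = ∑ i, a i * b i := by
        rw [← Fin.sum_univ_eq_sum_range (fun i => A i * B i) n]
        refine Finset.sum_congr rfl fun i _ => ?_
        simp [hAdef, hBdef, i.isLt]

lemma sq_sum_bound {n : ℕ} (Z : Matrix (Fin n) (Fin n) ℂ)
    (hr : ∀ k, ∑ l, ‖Z k l‖^2 = 1) (hc : ∀ l, ∑ k, ‖Z k l‖^2 = 1)
    (S T : Finset (Fin n)) :
    ∑ k ∈ S, ∑ l ∈ T, ‖Z k l‖^2 ≤ min (S.card : ℝ) T.card := by
  refine le_min ?_ ?_
  · calc ∑ k ∈ S, ∑ l ∈ T, ‖Z k l‖^2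
        ≤ ∑ k ∈ S, ∑ l, ‖Z k l‖^2 := by
          refine Finset.sum_le_sum fun k _ => ?_
          exact Finset.sum_le_sum_of_subset_of_nonneg (Finset.subset_univ T)
            (fun l _ _ => by positivity)
      _ = S.card := by rw [Finset.sum_congr rfl (fun k _ => hr k), Finset.sum_const, nsmul_eq_mul, mul_one]
  · rw [Finset.sum_comm]
    calc ∑ l ∈ T, ∑ k ∈ S, ‖Z k l‖^2
        ≤ ∑ l ∈ T, ∑ k, ‖Z k l‖^2 := by
          refine Finset.sum_le_sum fun l _ => ?_
          exact Finset.sum_le_sum_of_subset_of_nonneg (Finset.subset_univ S)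
            (fun k _ _ => by positivity)
      _ = T.card := by rw [Finset.sum_congr rfl (fun l _ => hc l), Finset.sum_const, nsmul_eq_mul, mul_one]

lemma psum {n : ℕ} (Z W : Matrix (Fin n) (Fin n) ℂ)
    (hZr : ∀ k, ∑ l, ‖Z k l‖^2 = 1) (hZc : ∀ l, ∑ k, ‖Z k l‖^2 = 1)
    (hWr : ∀ k, ∑ l, ‖W k l‖^2 = 1) (hWc : ∀ l, ∑ k, ‖W k l‖^2 = 1)
    (S T : Finset (Fin n)) :
    ∑ k ∈ S, ∑ l ∈ T, ((starRingEnd ℂ) (Z k l) * W k l).re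
      ≤ min (S.card : ℝ) T.card := by
  have hterm : ∀ k l, ((starRingEnd ℂ) (Z k l) * W k l).re
      ≤ (‖Z k l‖^2 + ‖W k l‖^2) / 2 := by
    intro k l
    have h1 : ((starRingEnd ℂ) (Z k l) * W k l).re
        ≤ ‖(starRingEnd ℂ) (Z k l) * W k l‖ := Complex.re_le_norm _
    rw [norm_mul] at h1
    have h2 : ‖(starRingEnd ℂ) (Z k l)‖ = ‖Z k l‖ := RCLike.norm_conj _
    rw [h2] at h1
    nlinarith [sq_nonneg (‖Z k l‖ - ‖W k l‖)]
  calc ∑ k ∈ S, ∑ l ∈ T, ((starRingEnd ℂ) (Z k l) * W k l).re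
      ≤ ∑ k ∈ S, ∑ l ∈ T, (‖Z k l‖^2 + ‖W k l‖^2) / 2 :=
        Finset.sum_le_sum fun k _ => Finset.sum_le_sum fun l _ => hterm k l
    _ = ((∑ k ∈ S, ∑ l ∈ T, ‖Z k l‖^2) + ∑ k ∈ S, ∑ l ∈ T, ‖W k l‖^2) / 2 := by
        rw [← Finset.sum_add_distrib]
        rw [Finset.sum_div]
        refine Finset.sum_congr rfl fun k _ => ?_
        rw [← Finset.sum_add_distrib, Finset.sum_div]
    _ ≤ (min (S.card : ℝ) T.card + min (S.card : ℝ) T.card) / 2 := by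
        have := sq_sum_bound Z hZr hZc S T
        have := sq_sum_bound W hWr hWc S T
        linarith
    _ = min (S.card : ℝ) T.card := by ring

lemma rows_fact {n : ℕ} (M : Matrix (Fin n) (Fin n) ℂ) (σ : Fin n → ℝ)
    (h : M * Mᴴ = Matrix.diagonal fun i => ((σ i : ℂ))^2) :
    ∃ V : Matrix (Fin n) (Fin n) ℂ, V * Vᴴ = 1 ∧ Vᴴ * V = 1 ∧
      M = Matrix.diagonal (fun i => (σ i : ℂ)) * V := by
  classical
  set r : Fin n → EuclideanSpace ℂ (Fin n) :=
    fun i => (WithLp.equiv 2 (Fin n → ℂ)).symm (M i) with hrdef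
  have hrapp : ∀ i j, r i j = M i j := fun i j => rfl
  have hinner : ∀ i j, (inner ℂ (r i) (r j) : ℂ)
      = if i = j then ((σ i : ℂ))^2 else 0 := by
    intro i j
    have h1 : (inner ℂ (r i) (r j) : ℂ) = ∑ k, (starRingEnd ℂ) (M i k) * M j k := by
      rw [PiLp.inner_apply]
      exact Finset.sum_congr rfl fun k _ => by rw [RCLike.inner_apply, hrapp, hrapp, mul_comm]
    have h2 : (M * Mᴴ) j i = ∑ k, M j k * (starRingEnd ℂ) (M i k) := by
      rw [Matrix.mul_apply]
      exact Finset.sum_congr rfl fun k _ => by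
        rw [Matrix.conjTranspose_apply, starRingEnd_apply]
    have h3 := congrFun (congrFun h j) i
    rw [h2] at h3
    rw [h1]
    rw [Finset.sum_congr rfl fun k _ => mul_comm ((starRingEnd ℂ) (M i k)) (M j k), h3,
      Matrix.diagonal_apply]
    by_cases hij : i = j
    · subst hij; simp
    · rw [if_neg (Ne.symm hij), if_neg hij]
  set s : Set (Fin n) := {i | σ i ≠ 0} with hsdef
  set v : Fin n → EuclideanSpace ℂ (Fin n) :=
    fun i => (((σ i)⁻¹ : ℝ) : ℂ) • r i with hvdef
  have horth : Orthonormal ℂ (s.restrict v) := by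
    rw [orthonormal_iff_ite]
    intro i j
    have heq : (inner ℂ (s.restrict v i) (s.restrict v j) : ℂ)
        = (starRingEnd ℂ) ((((σ (i : Fin n))⁻¹ : ℝ)) : ℂ)
          * ((((σ (j : Fin n))⁻¹ : ℝ)) : ℂ) * inner ℂ (r (i : Fin n)) (r (j : Fin n)) := by
      show inner ℂ ((((σ (i : Fin n))⁻¹ : ℝ) : ℂ) • r i) ((((σ (j : Fin n))⁻¹ : ℝ) : ℂ) • r j) = _
      simp only [inner_smul_left, inner_smul_right]
      ring
    rw [heq, hinner]
    by_cases hij : (i : Fin n) = (j : Fin n)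
    · have hij' : i = j := Subtype.ext hij
      subst hij'
      rw [if_pos rfl, if_pos rfl, Complex.conj_ofReal]
      have hi : σ (i : Fin n) ≠ 0 := i.prop
      have hi' : ((σ (i : Fin n) : ℝ) : ℂ) ≠ 0 := Complex.ofReal_ne_zero.mpr hi
      push_cast
      field_simp
    · rw [if_neg hij, if_neg (fun hc => hij (congrArg Subtype.val hc)), mul_zero]
  obtain ⟨b, hb⟩ := horth.exists_orthonormalBasis_extension_of_card_eq
    (by simp [finrank_euclideanSpace])
  set V : Matrix (Fin n) (Fin n) ℂ := Matrix.of (fun i j => b i j) with hVdef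
  have hbinner : ∀ i j, (inner ℂ (b i) (b j) : ℂ) = if i = j then 1 else 0 :=
    orthonormal_iff_ite.mp b.orthonormal
  have hV2 : V * Vᴴ = 1 := by
    ext i j
    have heq : (V * Vᴴ) i j = (inner ℂ (b j) (b i) : ℂ) := by
      rw [Matrix.mul_apply, PiLp.inner_apply]
      refine Finset.sum_congr rfl fun k _ => ?_
      rw [RCLike.inner_apply]
      simp only [hVdef, Matrix.conjTranspose_apply, Matrix.of_apply, starRingEnd_apply]
    rw [heq, hbinner, Matrix.one_apply]
    by_cases hij : i = j
    · subst hij; simp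
    · rw [if_neg (Ne.symm hij), if_neg hij]
  refine ⟨V, hV2, mul_eq_one_comm.mp hV2, ?_⟩
  ext i j
  rw [Matrix.diagonal_mul]
  by_cases hi : σ i = 0
  · have hri : r i = 0 := by
      have h0 : (inner ℂ (r i) (r i) : ℂ) = 0 := by
        rw [hinner, if_pos rfl, hi]; simp
      exact inner_self_eq_zero.mp h0
    have hM0 : M i j = 0 := by
      rw [← hrapp, hri]; rfl
    rw [hM0, hi]
    simp
  · have hbi : b i = v i := hb i hi
    have hVij : V i j = (((σ i)⁻¹ : ℝ) : ℂ) * M i j := by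
      show b i j = _
      rw [hbi, hvdef]
      show ((((σ i)⁻¹ : ℝ) : ℂ) • r i) j = _
      rw [PiLp.smul_apply, hrapp, smul_eq_mul]
    rw [hVij, ← mul_assoc]
    have hi' : ((σ i : ℝ) : ℂ) ≠ 0 := Complex.ofReal_ne_zero.mpr hi
    rw [show ((σ i : ℝ) : ℂ) * (((σ i)⁻¹ : ℝ) : ℂ) = 1 by
      push_cast; field_simp]
    rw [one_mul]

lemma svd {n : ℕ} (C : Matrix (Fin n) (Fin n) ℂ) :
    ∃ U V : Matrix (Fin n) (Fin n) ℂ,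
      Uᴴ * U = 1 ∧ U * Uᴴ = 1 ∧ V * Vᴴ = 1 ∧ Vᴴ * V = 1 ∧
      C = U * Matrix.diagonal (fun i => (svals C i : ℂ)) * V := by
  classical
  set hH := Matrix.isHermitian_mul_conjTranspose_self C with hHdef
  set lam := hH.eigenvalues with hlamdef
  set W : Matrix (Fin n) (Fin n) ℂ := (hH.eigenvectorUnitary : Matrix (Fin n) (Fin n) ℂ)
    with hWdef
  have hWmem := hH.eigenvectorUnitary.2
  rw [Unitary.mem_iff] at hWmem
  have hW1 : Wᴴ * W = 1 := by
    rw [← Matrix.star_eq_conjTranspose]; exact hWmem.1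
  set p : Equiv.Perm (Fin n) := Fin.revPerm.trans (Tuple.sort lam) with hpdef
  have hsvals : ∀ i, svals C i = Real.sqrt (lam (p i)) := fun i => rfl
  set U : Matrix (Fin n) (Fin n) ℂ := W.submatrix id ⇑p with hUdef
  have hU1 : Uᴴ * U = 1 := by
    ext i j
    have heq : (Uᴴ * U) i j = (Wᴴ * W) (p i) (p j) := by
      rw [Matrix.mul_apply, Matrix.mul_apply]
      exact Finset.sum_congr rfl fun k _ => by
        simp only [Matrix.conjTranspose_apply, hUdef, Matrix.submatrix_apply, id_eq]
    rw [heq, hW1, Matrix.one_apply, Matrix.one_apply]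
    by_cases hij : i = j
    · subst hij; simp
    · rw [if_neg (fun hc => hij (p.injective hc)), if_neg hij]
  have hU2 : U * Uᴴ = 1 := mul_eq_one_comm.mp hU1
  have hAU : (C * Cᴴ) * U = U * Matrix.diagonal (fun j => ((lam (p j) : ℝ) : ℂ)) := by
    ext i j
    rw [Matrix.mul_apply, Matrix.mul_diagonal]
    have hcol : ∀ k, U k j = (⇑(hH.eigenvectorBasis (p j)) : Fin n → ℂ) k := fun k => by
      rw [hUdef, Matrix.submatrix_apply, hWdef, id_eq]
      exact hH.eigenvectorUnitary_apply k (p j)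
    calc ∑ k, (C * Cᴴ) i k * U k j
        = ((C * Cᴴ) *ᵥ ⇑(hH.eigenvectorBasis (p j))) i := by
          rw [Matrix.mulVec, dotProduct]
          exact Finset.sum_congr rfl fun k _ => by rw [hcol]
      _ = (lam (p j) • ⇑(hH.eigenvectorBasis (p j))) i := by
          rw [hH.mulVec_eigenvectorBasis]
      _ = U i j * ((lam (p j) : ℝ) : ℂ) := by
          rw [Pi.smul_apply, Complex.real_smul, hcol, mul_comm]
  set M := Uᴴ * C with hMdef
  have hMM : M * Mᴴ = Matrix.diagonal fun i => ((svals C i : ℂ))^2 := by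
    have expand : M * Mᴴ = Uᴴ * ((C * Cᴴ) * U) := by
      rw [hMdef, Matrix.conjTranspose_mul, Matrix.conjTranspose_conjTranspose,
        Matrix.mul_assoc, Matrix.mul_assoc]
    have hfun : (fun j => ((lam (p j) : ℝ) : ℂ)) = fun i => ((svals C i : ℂ))^2 := by
      funext i
      rw [hsvals i, ← Complex.ofReal_pow,
        Real.sq_sqrt (Matrix.eigenvalues_self_mul_conjTranspose_nonneg C (p i))]
    rw [expand, hAU, ← Matrix.mul_assoc, hU1, Matrix.one_mul, hfun]
  obtain ⟨V, hV2, hV1, hMfact⟩ := rows_fact M (svals C) hMM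
  refine ⟨U, V, hU1, hU2, hV2, hV1, ?_⟩
  have hUMC : U * M = C := by
    rw [hMdef, ← Matrix.mul_assoc, hU2, Matrix.one_mul]
  rw [Matrix.mul_assoc, ← hMfact]
  exact hUMC.symm

lemma svals_nonneg {n : ℕ} (C : Matrix (Fin n) (Fin n) ℂ) (i : Fin n) :
    0 ≤ svals C i := Real.sqrt_nonneg _

lemma svals_antitone {n : ℕ} (C : Matrix (Fin n) (Fin n) ℂ) :
    Antitone (svals C) := by
  intro i j hij
  exact Real.sqrt_le_sqrt (Tuple.monotone_sort
    (Matrix.isHermitian_mul_conjTranspose_self C).eigenvalues (Fin.rev_le_rev.mpr hij))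

lemma svals_sq_sum {n : ℕ} (C : Matrix (Fin n) (Fin n) ℂ) :
    ∑ i, svals C i ^ 2 = ∑ i, ∑ j, ‖C i j‖ ^ 2 := by
  classical
  set hH := Matrix.isHermitian_mul_conjTranspose_self C with hHdef
  set lam := hH.eigenvalues with hlamdef
  set p : Equiv.Perm (Fin n) := Fin.revPerm.trans (Tuple.sort lam) with hpdef
  have h1 : ∑ i, svals C i ^ 2 = ∑ i, lam i := by
    have h1a : ∑ i, svals C i ^ 2 = ∑ i, lam (p i) :=
      Finset.sum_congr rfl fun i _ =>
        Real.sq_sqrt (Matrix.eigenvalues_self_mul_conjTranspose_nonneg C (p i))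
    rw [h1a]
    exact Equiv.sum_comp p lam
  have h2 : Matrix.trace (C * Cᴴ) = ∑ i, ((lam i : ℝ) : ℂ) := by
    conv_lhs => rw [hH.spectral_theorem]
    rw [Unitary.conjStarAlgAut_apply, Matrix.trace_mul_cycle, Unitary.coe_star_mul_self, Matrix.one_mul,
      Matrix.trace_diagonal]
    rfl
  have h3 : Matrix.trace (C * Cᴴ) = ∑ i, ∑ j, ((‖C i j‖ ^ 2 : ℝ) : ℂ) := by
    rw [Matrix.trace]
    refine Finset.sum_congr rfl fun i _ => ?_
    rw [Matrix.diag_apply, Matrix.mul_apply]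
    refine Finset.sum_congr rfl fun j _ => ?_
    rw [Matrix.conjTranspose_apply, Complex.star_def, Complex.mul_conj,
      Complex.normSq_eq_norm_sq]
  have h4 : ∑ i, lam i = ∑ i, ∑ j, ‖C i j‖ ^ 2 := by
    have h5 := h2.symm.trans h3
    push_cast at h5
    exact_mod_cast h5
  rw [h1, h4]

lemma sum4_swap {M : Type*} [AddCommMonoid M] {n : ℕ}
    (f : Fin n → Fin n → Fin n → Fin n → M) :
    ∑ i, ∑ j, ∑ k, ∑ l, f i j k l = ∑ k, ∑ l, ∑ i, ∑ j, f i j k l := by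
  calc ∑ i, ∑ j, ∑ k, ∑ l, f i j k l
      = ∑ i, ∑ k, ∑ j, ∑ l, f i j k l :=
        Finset.sum_congr rfl fun i _ => Finset.sum_comm
    _ = ∑ k, ∑ i, ∑ j, ∑ l, f i j k l := Finset.sum_comm
    _ = ∑ k, ∑ i, ∑ l, ∑ j, f i j k l := Finset.sum_congr rfl fun k _ =>
          Finset.sum_congr rfl fun i _ => Finset.sum_comm
    _ = ∑ k, ∑ l, ∑ i, ∑ j, f i j k l := Finset.sum_congr rfl fun k _ => Finset.sum_comm

lemma row_norm {n : ℕ} (Z : Matrix (Fin n) (Fin n) ℂ) (h : Z * Zᴴ = 1) (k : Fin n) :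
    ∑ l, ‖Z k l‖^2 = 1 := by
  have h1 := congrFun (congrFun h k) k
  have h2 : (Z * Zᴴ) k k = ((∑ l, ‖Z k l‖^2 : ℝ) : ℂ) := by
    rw [Matrix.mul_apply, Complex.ofReal_sum]
    refine Finset.sum_congr rfl fun l _ => ?_
    rw [Matrix.conjTranspose_apply, Complex.star_def, Complex.mul_conj,
      Complex.normSq_eq_norm_sq]
  rw [h2, Matrix.one_apply_eq] at h1
  exact_mod_cast h1

lemma col_norm {n : ℕ} (Z : Matrix (Fin n) (Fin n) ℂ) (h : Zᴴ * Z = 1) (l : Fin n) :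
    ∑ k, ‖Z k l‖^2 = 1 := by
  have h1 := congrFun (congrFun h l) l
  have h2 : (Zᴴ * Z) l l = ((∑ k, ‖Z k l‖^2 : ℝ) : ℂ) := by
    rw [Matrix.mul_apply, Complex.ofReal_sum]
    refine Finset.sum_congr rfl fun k _ => ?_
    rw [Matrix.conjTranspose_apply, Complex.star_def, mul_comm, Complex.mul_conj,
      Complex.normSq_eq_norm_sq]
  rw [h2, Matrix.one_apply_eq] at h1
  exact_mod_cast h1

lemma vonNeumann {n : ℕ} (C C' : Matrix (Fin n) (Fin n) ℂ) :
    (∑ i, ∑ j, C i j * (starRingEnd ℂ) (C' i j)).re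
      ≤ ∑ i, svals C i * svals C' i := by
  classical
  obtain ⟨U, V, hU1, hU2, hV2, hV1, hC⟩ := svd C
  obtain ⟨U', V', hU'1, hU'2, hV'2, hV'1, hC'⟩ := svd C'
  set σ := svals C with hσdef
  set σ' := svals C' with hσ'def
  set X := Uᴴ * U' with hXdef
  set Y := V * V'ᴴ with hYdef
  -- entry formulas
  have hCe : ∀ i j, C i j = ∑ k, U i k * (σ k : ℂ) * V k j := by
    intro i j
    conv_lhs => rw [hC]
    rw [Matrix.mul_apply]
    refine Finset.sum_congr rfl fun k _ => ?_
    rw [Matrix.mul_diagonal]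
  have hC'e : ∀ i j, (starRingEnd ℂ) (C' i j)
      = ∑ l, (starRingEnd ℂ) (U' i l) * (σ' l : ℂ) * (starRingEnd ℂ) (V' l j) := by
    intro i j
    conv_lhs => rw [hC']
    rw [Matrix.mul_apply, map_sum]
    refine Finset.sum_congr rfl fun l _ => ?_
    rw [Matrix.mul_diagonal]
    simp only [_root_.map_mul, Complex.conj_ofReal]
  -- X, Y entries
  have hXe : ∀ k l, (starRingEnd ℂ) (X k l) = ∑ i, U i k * (starRingEnd ℂ) (U' i l) := by
    intro k l
    rw [hXdef, Matrix.mul_apply, map_sum]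
    refine Finset.sum_congr rfl fun i _ => ?_
    rw [Matrix.conjTranspose_apply, Complex.star_def]
    simp only [_root_.map_mul, Complex.conj_conj]
  have hYe : ∀ k l, Y k l = ∑ j, V k j * (starRingEnd ℂ) (V' l j) := by
    intro k l
    rw [hYdef, Matrix.mul_apply]
    refine Finset.sum_congr rfl fun j _ => ?_
    rw [Matrix.conjTranspose_apply, Complex.star_def]
  -- main expansion
  have expand : ∑ i, ∑ j, C i j * (starRingEnd ℂ) (C' i j)
      = ∑ k, ∑ l, (σ k : ℂ) * (σ' l : ℂ) * ((starRingEnd ℂ) (X k l) * Y k l) := by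
    have e1 : ∀ i j, C i j * (starRingEnd ℂ) (C' i j)
        = ∑ k, ∑ l, (U i k * (starRingEnd ℂ) (U' i l)) *
            ((σ k : ℂ) * (σ' l : ℂ)) * (V k j * (starRingEnd ℂ) (V' l j)) := by
      intro i j
      rw [hCe, hC'e, Finset.sum_mul_sum]
      exact Finset.sum_congr rfl fun k _ => Finset.sum_congr rfl fun l _ => by ring
    calc ∑ i, ∑ j, C i j * (starRingEnd ℂ) (C' i j)
        = ∑ i, ∑ j, ∑ k, ∑ l, (U i k * (starRingEnd ℂ) (U' i l)) *
            ((σ k : ℂ) * (σ' l : ℂ)) * (V k j * (starRingEnd ℂ) (V' l j)) :=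
          Finset.sum_congr rfl fun i _ => Finset.sum_congr rfl fun j _ => e1 i j
      _ = ∑ k, ∑ l, ∑ i, ∑ j, (U i k * (starRingEnd ℂ) (U' i l)) *
            ((σ k : ℂ) * (σ' l : ℂ)) * (V k j * (starRingEnd ℂ) (V' l j)) := by
          exact sum4_swap _
      _ = ∑ k, ∑ l, (σ k : ℂ) * (σ' l : ℂ) * ((starRingEnd ℂ) (X k l) * Y k l) := by
          refine Finset.sum_congr rfl fun k _ => Finset.sum_congr rfl fun l _ => ?_
          rw [hXe, hYe, Finset.sum_mul_sum, Finset.mul_sum]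
          refine Finset.sum_congr rfl fun i _ => ?_
          rw [Finset.mul_sum]
          exact Finset.sum_congr rfl fun j _ => by ring
  rw [expand]
  -- take real parts
  have hre : (∑ k, ∑ l, (σ k : ℂ) * (σ' l : ℂ) * ((starRingEnd ℂ) (X k l) * Y k l)).re
      = ∑ k, ∑ l, σ k * σ' l * ((starRingEnd ℂ) (X k l) * Y k l).re := by
    rw [Complex.re_sum]
    refine Finset.sum_congr rfl fun k _ => ?_
    rw [Complex.re_sum]
    refine Finset.sum_congr rfl fun l _ => ?_
    rw [mul_assoc, Complex.re_ofReal_mul, Complex.re_ofReal_mul, ← mul_assoc]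
  rw [hre]
  -- unitarity of X and Y
  have hXu1 : X * Xᴴ = 1 := by
    rw [hXdef, Matrix.conjTranspose_mul, Matrix.conjTranspose_conjTranspose,
      Matrix.mul_assoc, ← Matrix.mul_assoc U' _ _, hU'2, Matrix.one_mul, hU1]
  have hXu2 : Xᴴ * X = 1 := mul_eq_one_comm.mp hXu1
  have hYu1 : Y * Yᴴ = 1 := by
    rw [hYdef, Matrix.conjTranspose_mul, Matrix.conjTranspose_conjTranspose,
      Matrix.mul_assoc, ← Matrix.mul_assoc V'ᴴ _ _, hV'1, Matrix.one_mul, hV2]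
  have hYu2 : Yᴴ * Y = 1 := mul_eq_one_comm.mp hYu1
  refine rearr_fin σ σ' (svals_antitone C) (svals_nonneg C) (svals_antitone C')
    (svals_nonneg C') _ ?_
  intro S T
  exact psum X Y (row_norm X hXu1) (col_norm X hXu2) (row_norm Y hYu1) (col_norm Y hYu2) S T

/-- Hoffman–Wielandt inequality for singular values:
∑ᵢ |sᵢ(C) − sᵢ(C')|² ≤ ‖C − C'‖_HS². -/
theorem stmt3 {n : ℕ} (C C' : Matrix (Fin n) (Fin n) ℂ) :
    ∑ i, |svals C i - svals C' i| ^ 2 ≤ ∑ i, ∑ j, ‖(C - C') i j‖ ^ 2 := by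
  have hL : ∑ i, |svals C i - svals C' i| ^ 2
      = ∑ i, svals C i ^ 2 + ∑ i, svals C' i ^ 2 - 2 * ∑ i, svals C i * svals C' i := by
    rw [Finset.sum_congr rfl (fun i (_ : i ∈ univ) => show |svals C i - svals C' i| ^ 2
      = svals C i ^ 2 + svals C' i ^ 2 - 2 * (svals C i * svals C' i) from by
        rw [_root_.sq_abs]; ring)]
    rw [Finset.sum_sub_distrib, Finset.sum_add_distrib, ← Finset.mul_sum]
  have hterm : ∀ i j, ‖(C - C') i j‖ ^ 2
      = ‖C i j‖ ^ 2 + ‖C' i j‖ ^ 2 - 2 * (C i j * (starRingEnd ℂ) (C' i j)).re := by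
    intro i j
    rw [Matrix.sub_apply, Complex.sq_norm, Complex.normSq_sub,
      ← Complex.sq_norm, ← Complex.sq_norm]
  have hR : ∑ i, ∑ j, ‖(C - C') i j‖ ^ 2
      = ∑ i, ∑ j, ‖C i j‖ ^ 2 + ∑ i, ∑ j, ‖C' i j‖ ^ 2
        - 2 * ∑ i, ∑ j, (C i j * (starRingEnd ℂ) (C' i j)).re := by
    rw [Finset.sum_congr rfl fun i (_ : i ∈ univ) => Finset.sum_congr rfl
      fun j (_ : j ∈ univ) => hterm i j]
    rw [Finset.sum_congr rfl fun i (_ : i ∈ univ) => (Finset.sum_sub_distrib (s := univ) _ _)]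
    rw [Finset.sum_sub_distrib]
    congr 1
    · rw [Finset.sum_congr rfl fun i (_ : i ∈ univ) => (Finset.sum_add_distrib (s := univ))]
      rw [Finset.sum_add_distrib]
    · rw [Finset.mul_sum]
      refine Finset.sum_congr rfl fun i _ => ?_
      rw [Finset.mul_sum]
  have hvn := vonNeumann C C'
  have hre : (∑ i, ∑ j, C i j * (starRingEnd ℂ) (C' i j)).re
      = ∑ i, ∑ j, (C i j * (starRingEnd ℂ) (C' i j)).re := by
    rw [Complex.re_sum]
    exact Finset.sum_congr rfl fun i _ => Complex.re_sum _ _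
  rw [hre] at hvn
  rw [hL, hR, svals_sq_sum C, svals_sq_sum C']
  linarith
end

section
/- For every x ∈ ℂⁿ with unit Euclidean norm that is (δ,ε)-incompressible (i.e., dist(x, Sparse(δ)) > ε), there exists a set I ⊆ {1,…,n} of cardinality at least (1/2)ε²δn such that |xᵢ| ≥ ε/√(2n) for all i ∈ I. -/
/-- Incompressible vectors are spread (complex version of Rudelson–Vershynin Lemma 3.4):
if x is a unit vector in ℂⁿ with dist(x, Sparse(δ)) > ε, then there is a set I of at
least (1/2)ε²δn coordinates on which |xᵢ| ≥ ε/√(2n). -/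
theorem stmt11 {n : ℕ} (hn : 0 < n) (δ ε : ℝ) (hδ : 0 < δ) (hε : 0 < ε)
    (x : EuclideanSpace ℂ (Fin n)) (hx : ‖x‖ = 1)
    (hinc : ε < Metric.infDist x
      {y : EuclideanSpace ℂ (Fin n) | (Set.ncard {i | y i ≠ 0} : ℝ) ≤ δ * n}) :
    ∃ I : Finset (Fin n), (1 / 2) * ε ^ 2 * δ * n ≤ (I.card : ℝ) ∧
      ∀ i ∈ I, ε / Real.sqrt (2 * n) ≤ ‖x i‖ := by
  set S : Set (EuclideanSpace ℂ (Fin n)) :=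
    {y : EuclideanSpace ℂ (Fin n) | (Set.ncard {i | y i ≠ 0} : ℝ) ≤ δ * n} with hS
  have h0S : (0 : EuclideanSpace ℂ (Fin n)) ∈ S := by
    have : {i : Fin n | (0 : EuclideanSpace ℂ (Fin n)) i ≠ 0} = ∅ := by
      ext i; simp
    simp only [hS, Set.mem_setOf_eq, this, Set.ncard_empty]
    push_cast
    positivity
  have hε1 : ε < 1 := by
    have h1 : Metric.infDist x S ≤ dist x 0 := Metric.infDist_le_dist_of_mem h0S
    rw [dist_zero_right, hx] at h1
    linarith
  set A : Finset (Fin n) :=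
    Finset.univ.filter (fun i => ε / Real.sqrt (2 * n) ≤ ‖x i‖) with hA
  have hcard : δ * n < (A.card : ℝ) := by
    by_contra h
    push_neg at h
    set y : EuclideanSpace ℂ (Fin n) := WithLp.toLp 2 (fun i => if i ∈ A then x i else 0) with hy
    have hyS : y ∈ S := by
      have hsub : {i : Fin n | y i ≠ 0} ⊆ (A : Set (Fin n)) := by
        intro i hi
        simp only [hy, PiLp.toLp_apply, Set.mem_setOf_eq] at hi
        by_contra hiA
        rw [Finset.mem_coe] at hiA
        exact hi (if_neg hiA)
      have := Set.ncard_le_ncard hsub A.finite_toSet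
      rw [Set.ncard_coe_finset] at this
      exact le_trans (by exact_mod_cast this) h
    have hle : ε < dist x y := lt_of_lt_of_le hinc (Metric.infDist_le_dist_of_mem hyS)
    have hterm : ∀ i : Fin n, dist (x i) (y i) ^ 2 ≤ ε ^ 2 / (2 * n) := by
      intro i
      by_cases hiA : i ∈ A
      · simp only [hy, PiLp.toLp_apply, if_pos hiA, dist_self]
        norm_num
        positivity
      · simp only [hy, PiLp.toLp_apply, if_neg hiA]
        have hlt : ‖x i‖ < ε / Real.sqrt (2 * n) := by
          simp only [hA, Finset.mem_filter, Finset.mem_univ, true_and] at hiA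
          linarith [not_le.mp hiA]
        have h2n : (0:ℝ) < 2 * n := by positivity
        have hd : dist (x i) (0:ℂ) = ‖x i‖ := by
          rw [dist_zero_right]
        rw [hd]
        have habs : (0:ℝ) ≤ ‖x i‖ := norm_nonneg _
        calc ‖x i‖ ^ 2 ≤ (ε / Real.sqrt (2 * n)) ^ 2 := by
              apply pow_le_pow_left₀ habs hlt.le
          _ = ε ^ 2 / (2 * n) := by rw [div_pow, Real.sq_sqrt h2n.le]
    have hdist : dist x y ≤ ε / Real.sqrt 2 := by
      rw [EuclideanSpace.dist_eq]
      have hsum : ∑ i, dist (x i) (y i) ^ 2 ≤ ε ^ 2 / 2 := by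
        calc ∑ i, dist (x i) (y i) ^ 2 ≤ ∑ _i : Fin n, ε ^ 2 / (2 * n) :=
              Finset.sum_le_sum (fun i _ => hterm i)
          _ = n * (ε ^ 2 / (2 * n)) := by simp [Finset.sum_const, mul_comm]
          _ = ε ^ 2 / 2 := by
              field_simp
      calc Real.sqrt (∑ i, dist (x i) (y i) ^ 2) ≤ Real.sqrt (ε ^ 2 / 2) :=
            Real.sqrt_le_sqrt hsum
        _ = ε / Real.sqrt 2 := by
            rw [Real.sqrt_div' _ , Real.sqrt_sq hε.le] <;> norm_num
    have h2 : ε / Real.sqrt 2 < ε := by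
      have h12 : (1:ℝ) < Real.sqrt 2 := by
        have : Real.sqrt 1 < Real.sqrt 2 := Real.sqrt_lt_sqrt (by norm_num) (by norm_num)
        simpa using this
      rw [div_lt_iff₀ (by linarith)]
      nlinarith
    linarith
  refine ⟨A, ?_, ?_⟩
  · have hε2 : ε ^ 2 ≤ 1 := by nlinarith
    have hn0 : (0:ℝ) ≤ (n:ℝ) := Nat.cast_nonneg n
    nlinarith
  · intro i hi
    simp only [hA, Finset.mem_filter, Finset.mem_univ, true_and] at hi
    exact hi
end

section
/- Let X = (X₁,…,Xₙ) be a random vector in ℝⁿ such that every coordinate-subvector (Xᵢ)_{i∈I} with |I| = m has density bounded by Cᵐ. Then for every ρ > 0 and α ∈ (0,1), P(|{j : |Xⱼ| ≥ ρ}| ≤ (1−α/2)n) ≤ binom(n, ⌊αn/2⌋) (2Cρ)^{⌊αn/2⌋}. In particular, choosing ρ = exp(−C' log(2/α)) makes this probability at most 2 exp(−αn) for suitable C'. -/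
open MeasureTheory
open scoped ENNReal

/-- If every coordinate-subvector of X of size m has density bounded by Cᵐ, then for
ρ > 0 and α ∈ (0,1),
P(|{j : |Xⱼ| ≥ ρ}| ≤ (1−α/2)n) ≤ binom(n, ⌊αn/2⌋)(2Cρ)^{⌊αn/2⌋}. -/
theorem stmt12 {n : ℕ} {Ω : Type*} {mΩ : MeasurableSpace Ω} (μ : Measure Ω)
    [IsProbabilityMeasure μ] (X : Ω → Fin n → ℝ) (hX : Measurable X)
    (C : ℝ) (hC : 0 < C)
    (hdens : ∀ I : Finset (Fin n), I.Nonempty →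
      ∃ f : (↥I → ℝ) → ℝ≥0∞,
        Measure.map (fun ω (i : I) => X ω i) μ = volume.withDensity f ∧
        ∀ x, f x ≤ ENNReal.ofReal (C ^ I.card)) :
    ∀ (ρ α : ℝ), 0 < ρ → 0 < α → α < 1 →
      μ {ω | (Set.ncard {j | ρ ≤ |X ω j|} : ℝ) ≤ (1 - α / 2) * n}
        ≤ (n.choose ⌊α * n / 2⌋₊) * ENNReal.ofReal ((2 * C * ρ) ^ ⌊α * n / 2⌋₊) := by
  intro ρ α hρ hα hα1
  classical
  set m := ⌊α * n / 2⌋₊ with hm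
  rcases Nat.eq_zero_or_pos m with h0 | hpos
  · rw [h0]
    simp only [Nat.choose_zero_right, pow_zero, ENNReal.ofReal_one, Nat.cast_one, one_mul]
    exact prob_le_one
  -- per-subset bound
  have key : ∀ I : Finset (Fin n), I.card = m →
      μ {ω | ∀ i ∈ I, |X ω i| ≤ ρ} ≤ ENNReal.ofReal ((2 * C * ρ) ^ m) := by
    intro I hI
    have hne : I.Nonempty := Finset.card_pos.mp (hI ▸ hpos)
    obtain ⟨f, hmap, hf⟩ := hdens I hne
    have hg : Measurable (fun ω (i : I) => X ω i) :=
      measurable_pi_lambda _ (fun i => (measurable_pi_apply (i : Fin n)).comp hX)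
    have hcube : MeasurableSet (Set.univ.pi fun _ : I => Set.Icc (-ρ) ρ) :=
      MeasurableSet.univ_pi fun _ => measurableSet_Icc
    have hpre : {ω | ∀ i ∈ I, |X ω i| ≤ ρ} =
        (fun ω (i : I) => X ω i) ⁻¹' (Set.univ.pi fun _ : I => Set.Icc (-ρ) ρ) := by
      ext ω
      simp only [Set.mem_preimage, Set.mem_pi, Set.mem_univ, forall_true_left,
        Set.mem_Icc, Set.mem_setOf_eq, ← abs_le]
      exact ⟨fun h i => h i i.2, fun h i hi => h ⟨i, hi⟩⟩
    have hvol : volume (Set.univ.pi fun _ : I => Set.Icc (-ρ) ρ)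
        = ENNReal.ofReal (2 * ρ) ^ m := by
      rw [volume_pi_pi]
      simp only [Real.volume_Icc]
      rw [Finset.prod_const, Finset.card_univ, Fintype.card_coe, hI]
      norm_num
      ring_nf
      rw [ENNReal.ofReal_mul hρ.le, ENNReal.ofReal_ofNat, mul_pow]
    calc μ {ω | ∀ i ∈ I, |X ω i| ≤ ρ}
        = (Measure.map (fun ω (i : I) => X ω i) μ)
            (Set.univ.pi fun _ : I => Set.Icc (-ρ) ρ) := by
          rw [Measure.map_apply hg hcube, hpre]
      _ = ∫⁻ x in (Set.univ.pi fun _ : I => Set.Icc (-ρ) ρ), f x := by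
          rw [hmap, withDensity_apply _ hcube]
      _ ≤ ∫⁻ _ in (Set.univ.pi fun _ : I => Set.Icc (-ρ) ρ),
            ENNReal.ofReal (C ^ I.card) := lintegral_mono fun x => hf x
      _ = ENNReal.ofReal (C ^ m) * ENNReal.ofReal (2 * ρ) ^ m := by
          rw [setLIntegral_const, hvol, hI]
      _ = ENNReal.ofReal ((2 * C * ρ) ^ m) := by
          rw [← ENNReal.ofReal_pow (by positivity), ← ENNReal.ofReal_mul (by positivity),
            ← mul_pow]
          ring_nf
  -- union bound
  have hsub : {ω | (Set.ncard {j | ρ ≤ |X ω j|} : ℝ) ≤ (1 - α / 2) * n} ⊆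
      ⋃ I ∈ Finset.univ.powersetCard m, {ω | ∀ i ∈ I, |X ω i| ≤ ρ} := by
    intro ω hω
    simp only [Set.mem_setOf_eq] at hω
    have hT : {j | ρ ≤ |X ω j|} = ↑(Finset.univ.filter fun j : Fin n => ρ ≤ |X ω j|) := by
      ext j; simp
    rw [hT, Set.ncard_coe_finset] at hω
    have h1 : (m : ℝ) ≤ α * n / 2 := Nat.floor_le (by positivity)
    have h2 : ((Finset.univ.filter fun j : Fin n => ρ ≤ |X ω j|).card : ℝ) + m ≤ n := by
      nlinarith
    have h3 : (Finset.univ.filter fun j : Fin n => ρ ≤ |X ω j|).card + m ≤ n := by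
      exact_mod_cast h2
    have h4 := Finset.card_filter_add_card_filter_not
      (s := (Finset.univ : Finset (Fin n))) (p := fun j => ρ ≤ |X ω j|)
    rw [Finset.card_univ, Fintype.card_fin] at h4
    obtain ⟨I, hIsub, hIcard⟩ := Finset.exists_subset_card_eq
      (s := Finset.univ.filter fun j : Fin n => ¬ ρ ≤ |X ω j|) (n := m) (by omega)
    refine Set.mem_biUnion (Finset.mem_powersetCard_univ.mpr hIcard) ?_
    intro i hi
    have := hIsub hi
    simp only [Finset.mem_filter, not_le] at this
    exact this.2.le
  calc μ {ω | (Set.ncard {j | ρ ≤ |X ω j|} : ℝ) ≤ (1 - α / 2) * n}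
      ≤ μ (⋃ I ∈ Finset.univ.powersetCard m, {ω | ∀ i ∈ I, |X ω i| ≤ ρ}) :=
        measure_mono hsub
    _ ≤ ∑ I ∈ Finset.univ.powersetCard m, μ {ω | ∀ i ∈ I, |X ω i| ≤ ρ} :=
        measure_biUnion_finset_le _ _
    _ ≤ ∑ _I ∈ Finset.univ.powersetCard m, ENNReal.ofReal ((2 * C * ρ) ^ m) :=
        Finset.sum_le_sum fun I hI => key I (Finset.mem_powersetCard_univ.mp hI)
    _ = (n.choose m) * ENNReal.ofReal ((2 * C * ρ) ^ m) := by
        rw [Finset.sum_const, Finset.card_powersetCard, Finset.card_univ, Fintype.card_fin,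
          nsmul_eq_mul]
end
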